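/- arXiv:2212.10811 — 2 statements merged into one kernel-verified Lean document; each statement's English description precedes it below -/
import Mathlib

section
/- Let ν be a finite compactly supported complex Borel measure on ℂ and let η be a finite positive compactly supported Borel measure on ℂ with c-linear growth such that η is mutually singular with |ν|. Then η(ND(ν)) = 0. -/
open Filter MeasureTheory Metric Set Topology Complex
open scoped ENNReal NNReal

noncomputable section

/-- Analytic capacity of a compact set `B`: the supremum of `|f'(∞)|` over functions
analytic on the complement of `B` (including at `∞`) and bounded by `1` there. -/
def anCapCpt (B : Set ℂ) : ℝ :=
  sSup {r : ℝ | ∃ (f : ℂ → ℂ) (a d : ℂ),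
    DifferentiableOn ℂ f Bᶜ ∧ (∀ z ∈ Bᶜ, ‖f z‖ ≤ 1) ∧
    Tendsto f (cocompact ℂ) (𝓝 a) ∧
    Tendsto (fun z => z * (f z - a)) (cocompact ℂ) (𝓝 d) ∧ r = ‖d‖}

/-- Analytic capacity of an arbitrary set. -/
def anCap (E : Set ℂ) : ℝ :=
  sSup {r : ℝ | ∃ B, B ⊆ E ∧ IsCompact B ∧ r = anCapCpt B}

/-- The `ε`-truncated Cauchy transform of the complex measure `g·μ`. -/
def truncCT (μ : Measure ℂ) (g : ℂ → ℂ) (ε : ℝ) (z : ℂ) : ℂ :=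
  ∫ w in {w : ℂ | ε < ‖w - z‖}, (w - z)⁻¹ * g w ∂μ

/-- The principal value Cauchy transform of `g·μ` exists at `z`. -/
def CTExistsAt (μ : Measure ℂ) (g : ℂ → ℂ) (z : ℂ) : Prop :=
  ∃ c : ℂ, Tendsto (fun ε => truncCT μ g ε z) (𝓝[>] (0 : ℝ)) (𝓝 c)

/-- The principal value Cauchy transform of `g·μ` at `z`. -/
def cauchyPV (μ : Measure ℂ) (g : ℂ → ℂ) (z : ℂ) : ℂ :=
  limUnder (𝓝[>] (0 : ℝ)) (fun ε => truncCT μ g ε z)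

/-- The constant function `1`, used for the Cauchy transform of a positive measure. -/
def oneF : ℂ → ℂ := fun _ => 1

/-- Upper linear density `Θ*` of a (positive) measure at a point. -/
def upperDensity (μ : Measure ℂ) (z : ℂ) : ℝ≥0∞ :=
  limsup (fun δ : ℝ => μ (ball z δ) / ENNReal.ofReal δ) (𝓝[>] (0 : ℝ))

/-- The zero linear density set `ZD(μ)`. -/
def ZD (μ : Measure ℂ) : Set ℂ :=
  {z | Tendsto (fun δ : ℝ => μ (ball z δ) / ENNReal.ofReal δ) (𝓝[>] (0 : ℝ)) (𝓝 0)}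

/-- The non-zero linear density set `ND(μ)`. -/
def ND (μ : Measure ℂ) : Set ℂ := {z | 0 < upperDensity μ z}

/-- `ND(μ, n) = {z : 1/n ≤ Θ*_μ(z) ≤ n}`. -/
def NDn (μ : Measure ℂ) (n : ℕ) : Set ℂ :=
  {z | ((n : ℝ≥0∞))⁻¹ ≤ upperDensity μ z ∧ upperDensity μ z ≤ (n : ℝ≥0∞)}

/-- `η` has `c`-linear growth. -/
def LinGrowth (η : Measure ℂ) (c : ℝ) : Prop :=
  ∀ z : ℂ, ∀ δ : ℝ, 0 < δ → η (ball z δ) ≤ ENNReal.ofReal (c * δ)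

/-- The graph of `A : ℝ → ℝ` inside `ℂ`. -/
def graphC (A : ℝ → ℝ) : Set ℂ := Set.range (fun x : ℝ => (x : ℂ) + A x * Complex.I)

/-- The function `L(z) = (1 + iA'(Re z)) / (2πi (1 + A'(Re z)²)^{1/2})`. -/
def Lgraph (A : ℝ → ℝ) (z : ℂ) : ℂ :=
  (1 + Complex.ofReal (deriv A z.re) * Complex.I) /
    (2 * Complex.ofReal Real.pi * Complex.I *
      Complex.ofReal (Real.sqrt (1 + (deriv A z.re) ^ 2)))

/-- The open region above the graph of `A`. -/
def Ugraph (A : ℝ → ℝ) : Set ℂ := {z | A z.re < z.im}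

/-- The open region below the graph of `A`. -/
def Lregion (A : ℝ → ℝ) : Set ℂ := {z | z.im < A z.re}

/-- A rotated Lipschitz graph: Lipschitz function, rotation angle and rotation center. -/
structure RotLipGraph where
  A : ℝ → ℝ
  M : ℝ≥0
  lip : LipschitzWith M A
  β : ℝ
  z₀ : ℂ

/-- The subset of `ℂ` determined by a rotated Lipschitz graph. -/
def RotLipGraph.carrier (Γ : RotLipGraph) : Set ℂ :=
  (fun z => Γ.z₀ + Complex.exp ((Γ.β : ℂ) * Complex.I) * (z - Γ.z₀)) '' graphC Γ.A

/-- Upper Plemelj boundary value `v⁺(ν, Γ, β)` of the Cauchy transform of `ν = g·μ` on the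
rotated graph `Γ`, where `hd` is the density of `ν` with respect to `H¹` on `Γ`. -/
def vP (μ : Measure ℂ) (g : ℂ → ℂ) (hd : ℂ → ℂ) (Γ : RotLipGraph) (lam : ℂ) : ℂ :=
  cauchyPV μ g lam +
    Complex.exp (-(Γ.β : ℂ) * Complex.I) * hd lam /
      (2 * Lgraph Γ.A ((lam - Γ.z₀) * Complex.exp (-(Γ.β : ℂ) * Complex.I) + Γ.z₀))

/-- Lower Plemelj boundary value `v⁻(ν, Γ, β)`. -/
def vM (μ : Measure ℂ) (g : ℂ → ℂ) (hd : ℂ → ℂ) (Γ : RotLipGraph) (lam : ℂ) : ℂ :=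
  cauchyPV μ g lam -
    Complex.exp (-(Γ.β : ℂ) * Complex.I) * hd lam /
      (2 * Lgraph Γ.A ((lam - Γ.z₀) * Complex.exp (-(Γ.β : ℂ) * Complex.I) + Γ.z₀))

/-- The decomposition `μ = h·H¹|_Γ + μ_s`, `Γ = ⋃ Γ_n`, `μ_s ⊥ H¹|_Γ`. -/
def GraphDecomp (μ : Measure ℂ) (Γ : ℕ → RotLipGraph) (h : ℂ → ℝ) (μs : Measure ℂ) : Prop :=
  (∀ z, 0 ≤ h z) ∧
  Integrable h ((μH[1] : Measure ℂ).restrict (⋃ n, (Γ n).carrier)) ∧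
  μ = ((μH[1] : Measure ℂ).restrict (⋃ n, (Γ n).carrier)).withDensity
        (fun z => ENNReal.ofReal (h z)) + μs ∧
  μs ⟂ₘ (μH[1] : Measure ℂ).restrict (⋃ n, (Γ n).carrier)

/-- A decomposition as produced by the structure theorem (Lemma `GammaExist`):
the decomposition `μ = h·H¹|_Γ + μ_s` together with `ND(μ) ≈ {h ≠ 0}` up to analytic
capacity zero and `Θ_{μ_s} = 0` off a set of analytic capacity zero. -/
def GoodDecomp (μ : Measure ℂ) (Γ : ℕ → RotLipGraph) (h : ℂ → ℝ) (μs : Measure ℂ) : Prop :=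
  GraphDecomp μ Γ h μs ∧
  anCap ((ND μ \ {z | h z ≠ 0}) ∪ ({z | h z ≠ 0} \ ND μ)) = 0 ∧
  ∃ Q : Set ℂ, anCap Q = 0 ∧ ∀ z ∉ Q,
    Tendsto (fun δ : ℝ => μs (ball z δ) / ENNReal.ofReal δ) (𝓝[>] (0 : ℝ)) (𝓝 0)

/-- `𝓕₀(Λ)`, the non-removable boundary of zero density. -/
def F0 (μ : Measure ℂ) (g : ℕ → ℂ → ℂ) : Set ℂ :=
  {z | z ∈ ZD μ ∧ ∀ j, cauchyPV μ (g j) z = 0}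

/-- `𝓡₀(Λ)`, the removable set of zero density. -/
def R0 (μ : Measure ℂ) (g : ℕ → ℂ → ℂ) : Set ℂ :=
  {z | z ∈ ZD μ ∧ ∃ j, cauchyPV μ (g j) z ≠ 0}

/-- `𝓕₊(Λ)`, the upper non-removable boundary. -/
def Fp (μ : Measure ℂ) (g : ℕ → ℂ → ℂ) (Γ : ℕ → RotLipGraph) (h : ℂ → ℝ) : Set ℂ :=
  (⋃ n, {z | z ∈ (Γ n).carrier ∧
    ∀ j, vP μ (g j) (fun w => g j w * (h w : ℂ)) (Γ n) z = 0}) ∩ ND μ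

/-- `𝓕₋(Λ)`, the lower non-removable boundary. -/
def Fm (μ : Measure ℂ) (g : ℕ → ℂ → ℂ) (Γ : ℕ → RotLipGraph) (h : ℂ → ℝ) : Set ℂ :=
  (⋃ n, {z | z ∈ (Γ n).carrier ∧
    ∀ j, vM μ (g j) (fun w => g j w * (h w : ℂ)) (Γ n) z = 0}) ∩ ND μ

/-- `𝓡₁(Λ)`, the removable set for the non-zero density part. -/
def R1 (μ : Measure ℂ) (g : ℕ → ℂ → ℂ) (Γ : ℕ → RotLipGraph) (h : ℂ → ℝ) : Set ℂ :=
  (⋃ n, {z | z ∈ (Γ n).carrier ∧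
    (∃ j, vP μ (g j) (fun w => g j w * (h w : ℂ)) (Γ n) z ≠ 0) ∧
    (∃ j, vM μ (g j) (fun w => g j w * (h w : ℂ)) (Γ n) z ≠ 0)}) ∩ ND μ

/-- The non-removable boundary `𝓕(Λ)`. -/
def Fset (μ : Measure ℂ) (g : ℕ → ℂ → ℂ) (Γ : ℕ → RotLipGraph) (h : ℂ → ℝ) : Set ℂ :=
  F0 μ g ∪ Fp μ g Γ h ∪ Fm μ g Γ h

/-- The removable set `𝓡(Λ)`. -/
def Rset (μ : Measure ℂ) (g : ℕ → ℂ → ℂ) (Γ : ℕ → RotLipGraph) (h : ℂ → ℝ) : Set ℂ :=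
  R0 μ g ∪ R1 μ g Γ h

/-- The set `𝓔_N(Λ)`. -/
def Eset (μ : Measure ℂ) (g : ℕ → ℂ → ℂ) (N : ℕ) : Set ℂ :=
  {z | ∀ j < N, CTExistsAt μ (g j) z ∧ ‖cauchyPV μ (g j) z‖ ≤ 1 / (N : ℝ)}

/-- `Rat(K)`: rational functions with poles off `K`. -/
def RatK (K : Set ℂ) : Set (ℂ → ℂ) :=
  {f | ∃ p q : Polynomial ℂ, (∀ z ∈ K, q.eval z ≠ 0) ∧ ∀ z, f z = p.eval z / q.eval z}

/-- Membership in `R^t(K, μ)`, the `L^t(μ)`-closure of `Rat(K)`. -/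
def MemRt (K : Set ℂ) (μ : Measure ℂ) (t : ℝ≥0∞) (f : ℂ → ℂ) : Prop :=
  MemLp f t μ ∧ ∀ ε : ℝ, 0 < ε → ∃ r ∈ RatK K, eLpNorm (f - r) t μ < ENNReal.ofReal ε

/-- Membership in `R^{t,∞}(K, μ) = R^t(K, μ) ∩ L^∞(μ)`. -/
def MemRtInf (K : Set ℂ) (μ : Measure ℂ) (t : ℝ≥0∞) (f : ℂ → ℂ) : Prop :=
  MemRt K μ t f ∧ MemLp f ⊤ μ

/-- Membership in the annihilator `R^t(K, μ)^⊥ ⊆ L^s(μ)`. -/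
def MemPerp (K : Set ℂ) (μ : Measure ℂ) (s : ℝ≥0∞) (g : ℂ → ℂ) : Prop :=
  MemLp g s μ ∧ ∀ r ∈ RatK K, ∫ z, r z * g z ∂μ = 0

/-- `Λ = {g_j}` is an `L^s(μ)`-norm dense subset of `R^t(K, μ)^⊥`. -/
def DenseInPerp (K : Set ℂ) (μ : Measure ℂ) (s : ℝ≥0∞) (g : ℕ → ℂ → ℂ) : Prop :=
  (∀ j, MemPerp K μ s (g j)) ∧
  ∀ f : ℂ → ℂ, MemPerp K μ s f → ∀ ε : ℝ, 0 < ε →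
    ∃ j, eLpNorm (f - g j) s μ < ENNReal.ofReal ε

/-- Bounded point evaluations for `R^t(K, μ)`. -/
def bpe (K : Set ℂ) (μ : Measure ℂ) (t : ℝ≥0∞) : Set ℂ :=
  {z | ∃ M : ℝ, 0 < M ∧ ∀ r ∈ RatK K, ‖r z‖ ≤ M * (eLpNorm r t μ).toReal}

/-- Analytic bounded point evaluations for `R^t(K, μ)`. -/
def abpe (K : Set ℂ) (μ : Measure ℂ) (t : ℝ≥0∞) : Set ℂ :=
  {z | z ∈ interior (bpe K μ t) ∧
    ∃ δ : ℝ, 0 < δ ∧ ∃ M : ℝ, 0 < M ∧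
      ∀ w ∈ ball z δ, ∀ r ∈ RatK K, ‖r w‖ ≤ M * (eLpNorm r t μ).toReal}

/-- The (closed) support of a measure on `ℂ`. -/
def sptM (μ : Measure ℂ) : Set ℂ := {z | ∀ δ : ℝ, 0 < δ → 0 < μ (ball z δ)}

/-- The spectrum of the multiplication operator `S_μ` (multiplication by `z`) on `R^t(K, μ)`:
points where multiplication by `z - λ` fails to be a bijection of `R^t(K, μ)`. -/
def specSmul (K : Set ℂ) (μ : Measure ℂ) (t : ℝ≥0∞) : Set ℂ :=
  {lam | ¬ ((∀ f : ℂ → ℂ, MemRt K μ t f → (∀ᵐ z ∂μ, (z - lam) * f z = 0) →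
              f =ᵐ[μ] (fun _ => (0 : ℂ))) ∧
            (∀ g : ℂ → ℂ, MemRt K μ t g →
              ∃ f : ℂ → ℂ, MemRt K μ t f ∧ ∀ᵐ z ∂μ, (z - lam) * f z = g z))}

/-- Purity of `S_μ` on `R^t(K, μ)`: no non-trivial direct `L^t` summand. -/
def PureRt (K : Set ℂ) (μ : Measure ℂ) (t : ℝ≥0∞) : Prop :=
  ∀ Δ : Set ℂ, MeasurableSet Δ →
    (∀ f : ℂ → ℂ, MemLp f t μ → MemRt K μ t (Δ.indicator f)) → μ Δ = 0

/-- The boundary piece `∂₁K`. -/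
def bdry1 (K : Set ℂ) : Set ℂ :=
  {lam | lam ∈ K ∧
    0 < limsup (fun δ : ℝ => anCap (ball lam δ \ K) / δ) (𝓝[>] (0 : ℝ))}

/-- The evaluation map `ρ : f ↦ f|_U` is an isometric isomorphism and a weak-star
homeomorphism from `R^{t,∞}(K, ν)` onto `H^∞(U)`. -/
def IsEvalIso (K : Set ℂ) (ν : Measure ℂ) (t : ℝ≥0∞) (U : Set ℂ) : Prop :=
  ∃ ρ : (ℂ → ℂ) → (ℂ → ℂ),
    (∀ f, MemRtInf K ν t f → DifferentiableOn ℂ (ρ f) U) ∧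
    (∀ f, MemRtInf K ν t f → ∀ᵐ z ∂(ν.restrict U), ρ f z = f z) ∧
    (∀ f g, MemRtInf K ν t f → MemRtInf K ν t g →
      ∀ z ∈ U, ρ (f + g) z = ρ f z + ρ g z) ∧
    (∀ f g, MemRtInf K ν t f → MemRtInf K ν t g →
      ∀ z ∈ U, ρ (f * g) z = ρ f z * ρ g z) ∧
    -- isometric: `sup_{z ∈ U} ‖ρ f z‖ = ‖f‖_{L^∞(ν)}`
    (∀ f, MemRtInf K ν t f →
      (∀ z ∈ U, ‖ρ f z‖ ≤ (eLpNorm f ⊤ ν).toReal) ∧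
      (∀ c : ℝ, (∀ z ∈ U, ‖ρ f z‖ ≤ c) → (eLpNorm f ⊤ ν).toReal ≤ c)) ∧
    -- injective
    (∀ f g, MemRtInf K ν t f → MemRtInf K ν t g →
      (∀ z ∈ U, ρ f z = ρ g z) → f =ᵐ[ν] g) ∧
    -- surjective onto `H^∞(U)`
    (∀ F : ℂ → ℂ, DifferentiableOn ℂ F U → (∃ M : ℝ, ∀ z ∈ U, ‖F z‖ ≤ M) →
      ∃ f, MemRtInf K ν t f ∧ ∀ z ∈ U, ρ f z = F z) ∧
    -- weak-star homeomorphism (sequentially, on norm-bounded sequences)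
    (∀ (fk : ℕ → ℂ → ℂ) (f : ℂ → ℂ), (∀ k, MemRtInf K ν t (fk k)) → MemRtInf K ν t f →
      (∃ M : ℝ≥0∞, ∀ k, eLpNorm (fk k) ⊤ ν ≤ M) →
      ((∀ φ : ℂ → ℂ, Integrable φ ν →
          Tendsto (fun k => ∫ z, fk k z * φ z ∂ν) atTop (𝓝 (∫ z, f z * φ z ∂ν))) ↔
       (∀ φ : ℂ → ℂ, Integrable φ ((volume : Measure ℂ).restrict U) →
          Tendsto (fun k => ∫ z, ρ (fk k) z * φ z ∂((volume : Measure ℂ).restrict U)) atTop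
            (𝓝 (∫ z, ρ f z * φ z ∂((volume : Measure ℂ).restrict U))))))

end

/-- A positive measure with linear growth that is mutually singular with `|ν|`
gives zero mass to the non-zero linear density set of `ν`.  The complex measure `ν` is
`gν·μν` and `|ν|` is the measure with density `‖gν‖` with respect to `μν`. -/
theorem stmt3 (μν : Measure ℂ) [IsFiniteMeasure μν] (gν : ℂ → ℂ)
    (hgν : Integrable gν μν) (hνcpt : ∃ B : Set ℂ, IsCompact B ∧ μν Bᶜ = 0)
    (η : Measure ℂ) [IsFiniteMeasure η] (hηcpt : ∃ B : Set ℂ, IsCompact B ∧ η Bᶜ = 0)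
    (c : ℝ) (hc : LinGrowth η c)
    (hsing : η ⟂ₘ μν.withDensity (fun w => (‖gν w‖₊ : ℝ≥0∞))) :
    η (ND (μν.withDensity (fun w => (‖gν w‖₊ : ℝ≥0∞)))) = 0 := by
  set ρ := μν.withDensity (fun w => (‖gν w‖₊ : ℝ≥0∞)) with hρdef
  have hfin : IsFiniteMeasure ρ := isFiniteMeasure_withDensity hgν.2.lt_top.ne
  by_cases hη0 : η = 0
  · simp [hη0]
  -- c is positive
  have hcpos : 0 < c := by
    by_contra hcle
    push_neg at hcle
    apply hη0
    have huniv : η univ = 0 := by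
      have hsub : (univ : Set ℂ) ⊆ ⋃ n : ℕ, ball 0 (n + 1) := by
        intro x _
        obtain ⟨n, hn⟩ := exists_nat_gt (‖x‖)
        exact mem_iUnion.2 ⟨n, by simpa [mem_ball, dist_eq_norm] using hn.trans_le (by linarith)⟩
      refine measure_mono_null hsub (measure_iUnion_null fun n => le_antisymm ?_ zero_le)
      have := hc 0 (n + 1) (by positivity)
      refine this.trans_eq (ENNReal.ofReal_eq_zero.2 ?_)
      have : (0:ℝ) < n + 1 := by positivity
      nlinarith
    exact Measure.measure_univ_eq_zero.1 huniv
  set C : ℝ≥0∞ := ENNReal.ofReal (2 * c) with hCdef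
  have hC0 : C ≠ 0 := by simp [hCdef, ENNReal.ofReal_eq_zero]; linarith
  have hCtop : C ≠ ∞ := ENNReal.ofReal_ne_top
  have hrn : ρ.rnDeriv η =ᵐ[η] 0 := (Measure.rnDeriv_eq_zero ρ η).mpr hsing.symm
  have hbes := Besicovitch.ae_tendsto_rnDeriv ρ η
  have key : ∀ᵐ z ∂η,
      Tendsto (fun δ : ℝ => ρ (ball z δ) / ENNReal.ofReal δ) (𝓝[>] (0:ℝ)) (𝓝 0) := by
    filter_upwards [hbes, hrn] with z hz h0
    rw [h0, Pi.zero_apply] at hz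
    have hub : ∀ᶠ δ in 𝓝[>] (0:ℝ), ρ (ball z δ) / ENNReal.ofReal δ ≤
        C * (ρ (closedBall z δ) / η (closedBall z δ)) := by
      filter_upwards [self_mem_nhdsWithin] with δ (hδ : 0 < δ)
      have hb : η (closedBall z δ) ≤ C * ENNReal.ofReal δ := by
        have h1 : closedBall z δ ⊆ ball z (2 * δ) :=
          closedBall_subset_ball (by linarith)
        calc η (closedBall z δ) ≤ η (ball z (2 * δ)) := measure_mono h1
          _ ≤ ENNReal.ofReal (c * (2 * δ)) := hc z (2 * δ) (by linarith)
          _ = C * ENNReal.ofReal δ := by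
              rw [hCdef, ← ENNReal.ofReal_mul (by linarith)]; ring_nf
      have h1 : ρ (ball z δ) / (C * ENNReal.ofReal δ) ≤
          ρ (closedBall z δ) / η (closedBall z δ) :=
        ENNReal.div_le_div (measure_mono ball_subset_closedBall) hb
      calc ρ (ball z δ) / ENNReal.ofReal δ
          = C * ρ (ball z δ) / (C * ENNReal.ofReal δ) :=
            (ENNReal.mul_div_mul_left _ _ hC0 hCtop).symm
        _ = C * (ρ (ball z δ) / (C * ENNReal.ofReal δ)) := by rw [mul_div_assoc]
        _ ≤ C * (ρ (closedBall z δ) / η (closedBall z δ)) := mul_le_mul_right h1 C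
    have hC : Tendsto (fun δ : ℝ => C * (ρ (closedBall z δ) / η (closedBall z δ)))
        (𝓝[>] (0:ℝ)) (𝓝 0) := by
      simpa using ENNReal.Tendsto.const_mul hz (Or.inr hCtop)
    exact tendsto_of_tendsto_of_tendsto_of_le_of_le' tendsto_const_nhds hC
      (Eventually.of_forall fun _ => zero_le) hub
  rw [ae_iff] at key
  refine measure_mono_null (fun z hz => ?_) key
  simp only [mem_setOf_eq]
  intro hten
  have : upperDensity ρ z = 0 := hten.limsup_eq
  exact absurd this (ne_of_gt hz)
end

section
/- For every g ∈ R^t(K,μ)^⊥, the principal value Cauchy transform C(gμ)(z) vanishes for almost every z in the non-removable boundary 𝓕 with respect to planar Lebesgue (area) measure. -/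
open Filter MeasureTheory Metric Set Topology Complex
open scoped ENNReal NNReal

noncomputable section Stmt11Aux

open MeasureTheory

namespace Stmt11Aux

/-- The full (absolutely convergent) Cauchy-type integral. -/
def CF (μ : Measure ℂ) (f : ℂ → ℂ) (z : ℂ) : ℂ := ∫ w, (w - z)⁻¹ * f w ∂μ

/-- The dominating lintegral. -/
def IF (μ : Measure ℂ) (f : ℂ → ℂ) (z : ℂ) : ℝ≥0∞ :=
  ∫⁻ w, (‖(w - z)⁻¹‖₊ : ℝ≥0∞) * (‖f w‖₊ : ℝ≥0∞) ∂μ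

lemma measurable_kernel : Measurable fun p : ℂ × ℂ => (p.2 - p.1)⁻¹ :=
  (measurable_snd.sub measurable_fst).inv

lemma IF_measurable (μ : Measure ℂ) [SFinite μ] {f : ℂ → ℂ} (hf : Measurable f) :
    Measurable (IF μ f) := by
  apply Measurable.lintegral_prod_right'
    (f := fun p : ℂ × ℂ => (‖(p.2 - p.1)⁻¹‖₊ : ℝ≥0∞) * (‖f p.2‖₊ : ℝ≥0∞))
  exact measurable_kernel.enorm.mul (hf.comp measurable_snd).enorm

lemma CF_stronglyMeasurable (μ : Measure ℂ) [SFinite μ] {f : ℂ → ℂ} (hf : Measurable f) :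
    StronglyMeasurable (CF μ f) := by
  apply MeasureTheory.StronglyMeasurable.integral_prod_right'
    (f := fun p : ℂ × ℂ => (p.2 - p.1)⁻¹ * f p.2)
  exact (measurable_kernel.mul (hf.comp measurable_snd)).stronglyMeasurable

lemma IF_integrable {μ : Measure ℂ} {f : ℂ → ℂ} (hf : Measurable f) {z : ℂ}
    (hI : IF μ f z ≠ ⊤) : Integrable (fun w => (w - z)⁻¹ * f w) μ := by
  refine ⟨(((measurable_id.sub_const z).inv).mul hf).aestronglyMeasurable, ?_⟩
  rw [hasFiniteIntegral_def]
  have : ∫⁻ w, (‖(w - z)⁻¹ * f w‖₊ : ℝ≥0∞) ∂μ = IF μ f z := by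
    unfold IF; congr 1; funext w; rw [nnnorm_mul]; push_cast; ring
  exact lt_of_eq_of_lt this (lt_top_iff_ne_top.2 hI)

lemma norm_CF_le (μ : Measure ℂ) (f : ℂ → ℂ) (z : ℂ) :
    (‖CF μ f z‖₊ : ℝ≥0∞) ≤ IF μ f z := by
  refine le_trans (enorm_integral_le_lintegral_enorm _) (le_of_eq ?_)
  unfold IF; congr 1; funext w; rw [enorm_mul]; rfl

lemma tendsto_truncCT {μ : Measure ℂ} {f : ℂ → ℂ} (hf : Measurable f) {z : ℂ}
    (hI : IF μ f z ≠ ⊤) :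
    Tendsto (fun ε => truncCT μ f ε z) (𝓝[>] (0:ℝ)) (𝓝 (CF μ f z)) := by
  have hint := IF_integrable hf hI
  have hmeas : ∀ ε : ℝ, MeasurableSet {w : ℂ | ε < ‖w - z‖} := fun ε =>
    measurableSet_lt measurable_const (measurable_id.sub_const z).norm
  have htr : ∀ ε : ℝ, truncCT μ f ε z
      = ∫ w, Set.indicator {w : ℂ | ε < ‖w - z‖} (fun w => (w - z)⁻¹ * f w) w ∂μ := fun ε =>
    (integral_indicator (hmeas ε)).symm
  refine Tendsto.congr (fun ε => (htr ε).symm) ?_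
  refine tendsto_integral_filter_of_dominated_convergence
    (fun w => ‖(w - z)⁻¹ * f w‖) ?_ ?_ hint.norm ?_
  · exact Filter.Eventually.of_forall fun ε => hint.1.indicator (hmeas ε)
  · exact Filter.Eventually.of_forall fun ε => Filter.Eventually.of_forall fun w =>
      norm_indicator_le_norm_self _ _
  · refine Filter.Eventually.of_forall fun w => ?_
    rcases eq_or_ne w z with rfl | hw
    · have hev : ∀ᶠ ε in 𝓝[>] (0:ℝ),
          Set.indicator {w' : ℂ | ε < ‖w' - w‖} (fun w' => (w' - w)⁻¹ * f w') w = 0 := by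
        filter_upwards [self_mem_nhdsWithin] with ε hε
        rw [Set.indicator_of_notMem]
        simp only [Set.mem_setOf_eq, sub_self, norm_zero, not_lt]
        exact le_of_lt hε
      have h0 : (w - w)⁻¹ * f w = 0 := by simp
      rw [h0]
      exact tendsto_const_nhds.congr' (hev.mono fun ε hε => hε.symm)
    · have hpos : 0 < ‖w - z‖ := norm_pos_iff.2 (sub_ne_zero.2 hw)
      have hev : ∀ᶠ ε in 𝓝[>] (0:ℝ),
          Set.indicator {w' : ℂ | ε < ‖w' - z‖} (fun w' => (w' - z)⁻¹ * f w') w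
            = (w - z)⁻¹ * f w := by
        filter_upwards [Ioo_mem_nhdsGT_of_mem ⟨le_refl (0:ℝ), hpos⟩] with ε hε
        exact Set.indicator_of_mem (by exact hε.2) _
      exact tendsto_const_nhds.congr' (hev.mono fun ε hε => hε.symm)

lemma cauchyPV_eq_CF {μ : Measure ℂ} {f : ℂ → ℂ} (hf : Measurable f) {z : ℂ}
    (hI : IF μ f z ≠ ⊤) : cauchyPV μ f z = CF μ f z :=
  (tendsto_truncCT hf hI).limUnder_eq

lemma truncCT_congr {μ : Measure ℂ} {f f' : ℂ → ℂ} (h : f =ᵐ[μ] f') (ε : ℝ) (z : ℂ) :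
    truncCT μ f ε z = truncCT μ f' ε z := by
  unfold truncCT
  exact integral_congr_ae (ae_restrict_of_ae (h.mono fun w hw => by simp only [hw]))

lemma cauchyPV_congr {μ : Measure ℂ} {f f' : ℂ → ℂ} (h : f =ᵐ[μ] f') (z : ℂ) :
    cauchyPV μ f z = cauchyPV μ f' z := by
  unfold cauchyPV
  rw [show (fun ε => truncCT μ f ε z) = fun ε => truncCT μ f' ε z from
    funext fun ε => truncCT_congr h ε z]

/-- Graphs of continuous functions are Lebesgue-null in `ℂ`. -/
lemma graph_null {A : ℝ → ℝ} (hA : Continuous A) : volume (graphC A) = 0 := by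
  have hset : graphC A = Complex.measurableEquivRealProd ⁻¹' {p : ℝ × ℝ | p.2 = A p.1} := by
    ext z
    simp only [graphC, Set.mem_range, Set.mem_preimage, Set.mem_setOf_eq]
    constructor
    · rintro ⟨x, rfl⟩
      show ((x:ℂ) + (A x : ℂ) * Complex.I).im = A ((x:ℂ) + (A x : ℂ) * Complex.I).re
      simp
    · intro hz
      have hz' : z.im = A z.re := hz
      refine ⟨z.re, ?_⟩
      apply Complex.ext <;> simp [hz'.symm]
  have hS : MeasurableSet {p : ℝ × ℝ | p.2 = A p.1} :=
    measurableSet_eq_fun measurable_snd (hA.measurable.comp measurable_fst)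
  rw [hset, Complex.volume_preserving_equiv_real_prod.measure_preimage hS.nullMeasurableSet]
  rw [show (volume : Measure (ℝ × ℝ)) = (volume : Measure ℝ).prod volume from rfl,
    Measure.prod_apply hS]
  have : ∀ x : ℝ, (volume : Measure ℝ) (Prod.mk x ⁻¹' {p : ℝ × ℝ | p.2 = A p.1}) = 0 := by
    intro x
    have : (Prod.mk x ⁻¹' {p : ℝ × ℝ | p.2 = A p.1}) = {A x} := by
      ext y; simp [Set.mem_preimage, Set.mem_singleton_iff]
    rw [this]; exact measure_singleton _
  simp [this]

lemma carrier_null (Γ : RotLipGraph) : volume Γ.carrier = 0 := by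
  set c : ℂ := Complex.exp ((Γ.β : ℂ) * Complex.I) with hc
  have h0 : volume (graphC Γ.A) = 0 := graph_null Γ.lip.continuous
  -- translate down
  have h1 : volume ((fun z : ℂ => z - Γ.z₀) '' graphC Γ.A) = 0 := by
    have hpre : (fun z : ℂ => z - Γ.z₀) '' graphC Γ.A
        = (fun x : ℂ => x + Γ.z₀) ⁻¹' graphC Γ.A := by
      ext x
      constructor
      · rintro ⟨y, hy, rfl⟩
        show y - Γ.z₀ + Γ.z₀ ∈ graphC Γ.A
        rwa [show y - Γ.z₀ + Γ.z₀ = y by ring]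
      · intro hx
        exact ⟨x + Γ.z₀, hx, by ring⟩
    rw [hpre]
    exact (measurePreserving_add_right (volume : Measure ℂ)
      Γ.z₀).quasiMeasurePreserving.preimage_null h0
  -- multiply
  have h2 : volume ((fun z : ℂ => c * z) '' ((fun z : ℂ => z - Γ.z₀) '' graphC Γ.A)) = 0 := by
    have : (fun z : ℂ => c * z) = ⇑((LinearMap.mulLeft ℝ c : ℂ →ₗ[ℝ] ℂ)) := by
      funext z; simp
    rw [this, Measure.addHaar_image_linearMap, h1, mul_zero]
  -- translate back
  have h3 : volume ((fun z : ℂ => Γ.z₀ + z) ''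
      ((fun z : ℂ => c * z) '' ((fun z : ℂ => z - Γ.z₀) '' graphC Γ.A))) = 0 := by
    set T := (fun z : ℂ => c * z) '' ((fun z : ℂ => z - Γ.z₀) '' graphC Γ.A)
    have hpre : (fun z : ℂ => Γ.z₀ + z) '' T = (fun x : ℂ => x + -Γ.z₀) ⁻¹' T := by
      ext x
      constructor
      · rintro ⟨y, hy, rfl⟩
        show Γ.z₀ + y + -Γ.z₀ ∈ T
        rwa [show Γ.z₀ + y + -Γ.z₀ = y by ring]
      · intro hx
        exact ⟨x + -Γ.z₀, hx, by ring⟩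
    rw [hpre]
    exact (measurePreserving_add_right (volume : Measure ℂ)
      (-Γ.z₀)).quasiMeasurePreserving.preimage_null h2
  have hcar : Γ.carrier = (fun z : ℂ => Γ.z₀ + z) ''
      ((fun z : ℂ => c * z) '' ((fun z : ℂ => z - Γ.z₀) '' graphC Γ.A)) := by
    unfold RotLipGraph.carrier
    rw [Set.image_image, Set.image_image]
  rw [hcar]; exact h3

/-- Finiteness of the local integral of `‖z⁻¹‖`. -/
lemma Ib_lt_top (R : ℝ) :
    (∫⁻ z in Metric.ball (0:ℂ) R, (‖z⁻¹‖₊ : ℝ≥0∞) ∂volume) < ⊤ := by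
  rcases le_or_gt R 0 with hR | hR
  · rw [Metric.ball_eq_empty.2 hR]; simp
  · set r : ℕ → ℝ := fun k => R * (2⁻¹ : ℝ) ^ k with hr
    have hrpos : ∀ k, 0 < r k := fun k => by positivity
    set Ann : ℕ → Set ℂ := fun k => Metric.ball (0:ℂ) (r k) \ Metric.ball 0 (r (k+1)) with hAnn
    have hAnnMeas : ∀ k, MeasurableSet (Ann k) := fun k =>
      measurableSet_ball.diff measurableSet_ball
    set F : ℂ → ℝ≥0∞ :=
      fun z => ∑' k, (Ann k).indicator (fun _ => (ENNReal.ofReal (r (k+1)))⁻¹) z with hF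
    have hpt : ∀ z ∈ Metric.ball (0:ℂ) R, (‖z⁻¹‖₊ : ℝ≥0∞) ≤ F z := by
      intro z hz
      rcases eq_or_ne z 0 with rfl | hz0
      · simp
      have hzn : 0 < ‖z‖ := norm_pos_iff.2 hz0
      have hzR : ‖z‖ < R := mem_ball_zero_iff.1 hz
      have hex : ∃ k, r (k+1) ≤ ‖z‖ := by
        obtain ⟨k, hk⟩ := exists_pow_lt_of_lt_one (div_pos hzn hR) (by norm_num : (2⁻¹:ℝ) < 1)
        refine ⟨k, ?_⟩
        have h1 : r k < ‖z‖ := by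
          calc r k = (2⁻¹:ℝ)^k * R := by ring
            _ < (‖z‖ / R) * R := by
                exact mul_lt_mul_of_pos_right hk hR
            _ = ‖z‖ := by field_simp
        have h2 : r (k+1) ≤ r k := by
          have : (2⁻¹:ℝ)^(k+1) ≤ (2⁻¹:ℝ)^k := by
            apply pow_le_pow_of_le_one (by norm_num) (by norm_num)
            omega
          have := mul_le_mul_of_nonneg_left this (le_of_lt hR)
          simpa [hr] using this
        linarith
      set k := Nat.find hex with hkdef
      have hk1 : r (k+1) ≤ ‖z‖ := Nat.find_spec hex
      have hk2 : ‖z‖ < r k := by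
        by_cases h0 : k = 0
        · rw [h0]; simpa [hr] using hzR
        · have hlt : k - 1 < k := Nat.pred_lt h0
          have hmin := Nat.find_min hex hlt
          rw [show k - 1 + 1 = k from Nat.succ_pred_eq_of_pos (Nat.pos_of_ne_zero h0)] at hmin
          exact lt_of_not_ge hmin
      have hmem : z ∈ Ann k := by
        constructor
        · exact mem_ball_zero_iff.2 hk2
        · intro hmem'
          exact absurd (mem_ball_zero_iff.1 hmem') (not_lt.2 hk1)
      have hval : (‖z⁻¹‖₊ : ℝ≥0∞) ≤ (ENNReal.ofReal (r (k+1)))⁻¹ := by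
        rw [← enorm_eq_nnnorm, ← ofReal_norm_eq_enorm, norm_inv,
          ENNReal.ofReal_inv_of_pos hzn]
        exact ENNReal.inv_le_inv' (ENNReal.ofReal_le_ofReal hk1)
      calc (‖z⁻¹‖₊ : ℝ≥0∞) ≤ (ENNReal.ofReal (r (k+1)))⁻¹ := hval
        _ = (Ann k).indicator (fun _ => (ENNReal.ofReal (r (k+1)))⁻¹) z :=
            (Set.indicator_of_mem hmem fun _ => (ENNReal.ofReal (r (k+1)))⁻¹).symm
        _ ≤ F z := ENNReal.le_tsum k
    have hFmeas : Measurable F :=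
      Measurable.ennreal_tsum fun k => measurable_const.indicator (hAnnMeas k)
    have hterm : ∀ k, (ENNReal.ofReal (r (k+1)))⁻¹ * volume (Metric.ball (0:ℂ) (r k))
        = (ENNReal.ofReal (2*R) * (NNReal.pi : ℝ≥0∞)) * (2⁻¹ : ℝ≥0∞)^k := by
      intro k
      rw [Complex.volume_ball]
      have ha : 0 < r k := hrpos k
      have hsucc : r (k+1) = r k * 2⁻¹ := by rw [hr]; ring
      rw [hsucc, ← ENNReal.ofReal_inv_of_pos (by positivity),
        ← ENNReal.ofReal_pow (le_of_lt ha)]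
      rw [← mul_assoc, ← ENNReal.ofReal_mul (by positivity)]
      have hcalc : (r k * 2⁻¹)⁻¹ * (r k)^2 = 2 * r k := by
        field_simp
      rw [hcalc]
      have h2rk : (2 : ℝ) * r k = (2*R) * (2⁻¹:ℝ)^k := by rw [hr]; ring
      rw [h2rk, ENNReal.ofReal_mul (by positivity), ENNReal.ofReal_pow (by norm_num)]
      have : ENNReal.ofReal (2⁻¹:ℝ) = (2⁻¹ : ℝ≥0∞) := by
        rw [ENNReal.ofReal_inv_of_pos (by norm_num)]
        norm_num
      rw [this]
      ring
    calc (∫⁻ z in Metric.ball (0:ℂ) R, (‖z⁻¹‖₊ : ℝ≥0∞) ∂volume)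
        ≤ ∫⁻ z in Metric.ball (0:ℂ) R, F z ∂volume := setLIntegral_mono hFmeas hpt
      _ ≤ ∫⁻ z, F z ∂volume := setLIntegral_le_lintegral _ _
      _ = ∑' k, (ENNReal.ofReal (r (k+1)))⁻¹ * volume (Ann k) := by
          rw [hF, lintegral_tsum fun k => (measurable_const.indicator (hAnnMeas k)).aemeasurable]
          congr 1
          funext k
          exact lintegral_indicator_const (hAnnMeas k) _
      _ ≤ ∑' k, (ENNReal.ofReal (r (k+1)))⁻¹ * volume (Metric.ball (0:ℂ) (r k)) :=
          ENNReal.tsum_le_tsum fun k => mul_le_mul_right (measure_mono Set.diff_subset) _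
      _ = ∑' k, (ENNReal.ofReal (2*R) * (NNReal.pi : ℝ≥0∞)) * (2⁻¹ : ℝ≥0∞)^k := by
          congr 1; funext k; exact hterm k
      _ = (ENNReal.ofReal (2*R) * (NNReal.pi : ℝ≥0∞)) * ∑' k, (2⁻¹ : ℝ≥0∞)^k :=
          ENNReal.tsum_mul_left
      _ < ⊤ := by
          rw [ENNReal.tsum_geometric]
          refine ENNReal.mul_lt_top (ENNReal.mul_lt_top ENNReal.ofReal_lt_top
            ENNReal.coe_lt_top) ?_
          exact ENNReal.inv_lt_top.2 (tsub_pos_of_lt (ENNReal.inv_lt_one.2 ENNReal.one_lt_two))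

lemma J_le (R : ℝ) (hR : 0 < R) (w : ℂ) :
    ∫⁻ z in Metric.ball (0:ℂ) R, (‖(w - z)⁻¹‖₊ : ℝ≥0∞) ∂volume ≤
      (∫⁻ z in Metric.ball (0:ℂ) R, (‖z⁻¹‖₊ : ℝ≥0∞) ∂volume)
        + (ENNReal.ofReal R)⁻¹ * volume (Metric.ball (0:ℂ) R) := by
  set κ : ℂ → ℝ≥0∞ := fun z => (‖(w - z)⁻¹‖₊ : ℝ≥0∞) with hκ
  have hκmeas : Measurable κ := ((measurable_const.sub measurable_id).inv).enorm
  set G : ℂ → ℝ≥0∞ := fun u => (Metric.ball (0:ℂ) R).indicator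
      (fun u => (‖u⁻¹‖₊ : ℝ≥0∞)) u with hG
  have hGmeas : Measurable G := (measurable_inv.enorm).indicator measurableSet_ball
  have hpt : ∀ z, (Metric.ball (0:ℂ) R).indicator κ z ≤
      (Metric.ball w R).indicator κ z
        + (Metric.ball (0:ℂ) R).indicator (fun _ => (ENNReal.ofReal R)⁻¹) z := by
    intro z
    by_cases hz : z ∈ Metric.ball (0:ℂ) R
    · rw [Set.indicator_of_mem hz]
      by_cases hz2 : z ∈ Metric.ball w R
      · rw [Set.indicator_of_mem hz2]
        exact self_le_add_right _ _
      · rw [Set.indicator_of_notMem hz2, Set.indicator_of_mem hz, zero_add]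
        have hdist : R ≤ ‖w - z‖ := by
          have := Metric.mem_ball.not.1 hz2
          push_neg at this
          rwa [dist_eq_norm, norm_sub_rev] at this
        rw [hκ]
        simp only
        rw [← enorm_eq_nnnorm, ← ofReal_norm_eq_enorm, norm_inv]
        have hwz : 0 < ‖w - z‖ := lt_of_lt_of_le hR hdist
        rw [ENNReal.ofReal_inv_of_pos hwz]
        exact ENNReal.inv_le_inv' (ENNReal.ofReal_le_ofReal hdist)
    · rw [Set.indicator_of_notMem hz]
      exact zero_le
  have htrans : ∫⁻ z, (Metric.ball w R).indicator κ z ∂volume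
      = ∫⁻ z in Metric.ball (0:ℂ) R, (‖z⁻¹‖₊ : ℝ≥0∞) ∂volume := by
    have heq : ∀ z, (Metric.ball w R).indicator κ z = G (w - z) := by
      intro z
      by_cases hz : z ∈ Metric.ball w R
      · have hz' : w - z ∈ Metric.ball (0:ℂ) R := by
          rw [mem_ball_zero_iff]
          rw [Metric.mem_ball, dist_eq_norm, norm_sub_rev] at hz
          exact hz
        rw [Set.indicator_of_mem hz, hG]
        simp only
        rw [Set.indicator_of_mem hz']
      · have hz' : w - z ∉ Metric.ball (0:ℂ) R := by
          rw [mem_ball_zero_iff]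
          rw [Metric.mem_ball, dist_eq_norm, norm_sub_rev] at hz
          exact hz
        rw [Set.indicator_of_notMem hz, hG]
        simp only
        rw [Set.indicator_of_notMem hz']
    calc ∫⁻ z, (Metric.ball w R).indicator κ z ∂volume
        = ∫⁻ z, G (w - z) ∂volume := by
          congr 1; funext z; exact heq z
      _ = ∫⁻ z, G (w + z) ∂volume := by
          rw [show (fun z : ℂ => G (w - z)) = fun z : ℂ => G (w + (-z)) from
            funext fun z => by rw [sub_eq_add_neg]]
          exact (Measure.measurePreserving_neg (volume : Measure ℂ)).lintegral_comp
            (hGmeas.comp (measurable_const.add measurable_id))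
      _ = ∫⁻ z, G z ∂volume := lintegral_add_left_eq_self G w
      _ = ∫⁻ z in Metric.ball (0:ℂ) R, (‖z⁻¹‖₊ : ℝ≥0∞) ∂volume := by
          rw [hG, lintegral_indicator measurableSet_ball]
  calc ∫⁻ z in Metric.ball (0:ℂ) R, (‖(w - z)⁻¹‖₊ : ℝ≥0∞) ∂volume
      = ∫⁻ z, (Metric.ball (0:ℂ) R).indicator κ z ∂volume := by
        rw [lintegral_indicator measurableSet_ball]
    _ ≤ ∫⁻ z, ((Metric.ball w R).indicator κ z
          + (Metric.ball (0:ℂ) R).indicator (fun _ => (ENNReal.ofReal R)⁻¹) z) ∂volume :=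
        lintegral_mono hpt
    _ = ∫⁻ z, (Metric.ball w R).indicator κ z ∂volume
          + ∫⁻ z, (Metric.ball (0:ℂ) R).indicator (fun _ => (ENNReal.ofReal R)⁻¹) z ∂volume :=
        lintegral_add_left (hκmeas.indicator measurableSet_ball) _
    _ = (∫⁻ z in Metric.ball (0:ℂ) R, (‖z⁻¹‖₊ : ℝ≥0∞) ∂volume)
          + (ENNReal.ofReal R)⁻¹ * volume (Metric.ball (0:ℂ) R) := by
        rw [htrans, lintegral_indicator_const measurableSet_ball]

lemma swap_bound {μ : Measure ℂ} [IsFiniteMeasure μ] {f : ℂ → ℂ} (hf : Measurable f)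
    (R : ℝ) (hR : 0 < R) :
    ∫⁻ z in Metric.ball (0:ℂ) R, IF μ f z ∂volume ≤
      ((∫⁻ z in Metric.ball (0:ℂ) R, (‖z⁻¹‖₊ : ℝ≥0∞) ∂volume)
        + (ENNReal.ofReal R)⁻¹ * volume (Metric.ball (0:ℂ) R))
        * ∫⁻ w, (‖f w‖₊ : ℝ≥0∞) ∂μ := by
  set C := (∫⁻ z in Metric.ball (0:ℂ) R, (‖z⁻¹‖₊ : ℝ≥0∞) ∂volume)
    + (ENNReal.ofReal R)⁻¹ * volume (Metric.ball (0:ℂ) R) with hC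
  have hswap : ∫⁻ z in Metric.ball (0:ℂ) R, IF μ f z ∂volume
      = ∫⁻ w, (∫⁻ z in Metric.ball (0:ℂ) R, (‖(w - z)⁻¹‖₊ : ℝ≥0∞) ∂volume)
          * (‖f w‖₊ : ℝ≥0∞) ∂μ := by
    unfold IF
    rw [lintegral_lintegral_swap
      ((measurable_kernel.enorm.mul (hf.comp measurable_snd).enorm).aemeasurable)]
    congr 1
    funext w
    exact lintegral_mul_const _ ((measurable_const.sub measurable_id).inv).enorm
  rw [hswap]
  calc ∫⁻ w, (∫⁻ z in Metric.ball (0:ℂ) R, (‖(w - z)⁻¹‖₊ : ℝ≥0∞) ∂volume)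
          * (‖f w‖₊ : ℝ≥0∞) ∂μ
      ≤ ∫⁻ w, C * (‖f w‖₊ : ℝ≥0∞) ∂μ :=
        lintegral_mono fun w => mul_le_mul_left (J_le R hR w) _
    _ = C * ∫⁻ w, (‖f w‖₊ : ℝ≥0∞) ∂μ := lintegral_const_mul C hf.enorm

end Stmt11Aux

end Stmt11Aux

/-- For `g ∈ R^t(K,μ)^⊥`, the Cauchy transform `C(gμ)` vanishes area-a.e.
on the non-removable boundary `𝓕`. -/
theorem stmt11 (K : Set ℂ) (hK : IsCompact K) (μ : Measure ℂ) [IsFiniteMeasure μ]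
    (hμK : μ Kᶜ = 0) (t s : ℝ≥0∞) (ht1 : 1 ≤ t) (ht2 : t ≠ ⊤) (hts : 1 / t + 1 / s = 1)
    (g : ℕ → ℂ → ℂ) (hΛ : DenseInPerp K μ s g)
    (Γ : ℕ → RotLipGraph) (h : ℂ → ℝ) (μs : Measure ℂ) (hdec : GoodDecomp μ Γ h μs)
    (gp : ℂ → ℂ) (hgp : MemPerp K μ s gp) :
    ∀ᵐ z ∂((volume : Measure ℂ).restrict (Fset μ g Γ h)), cauchyPV μ gp z = 0 := by
  classical
  open Stmt11Aux in
  obtain ⟨hgpL, hgpAnn⟩ := hgp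
  -- measurable representatives
  set gp' : ℂ → ℂ := hgpL.aestronglyMeasurable.mk gp with hgp'def
  have hgp'meas : Measurable gp' := hgpL.aestronglyMeasurable.stronglyMeasurable_mk.measurable
  have hgp'ae : gp =ᵐ[μ] gp' := hgpL.aestronglyMeasurable.ae_eq_mk
  have hgL : ∀ i, MemLp (g i) s μ := fun i => (hΛ.1 i).1
  set g' : ℕ → ℂ → ℂ := fun i => (hgL i).aestronglyMeasurable.mk (g i) with hg'def
  have hg'meas : ∀ i, Measurable (g' i) := fun i =>
    (hgL i).aestronglyMeasurable.stronglyMeasurable_mk.measurable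
  have hg'ae : ∀ i, g i =ᵐ[μ] g' i := fun i => (hgL i).aestronglyMeasurable.ae_eq_mk
  -- s ≥ 1
  have hs1 : (1 : ℝ≥0∞) ≤ s := by
    have h1 : 1/s ≤ 1 := by
      calc 1/s ≤ 1/t + 1/s := self_le_add_left _ _
        _ = 1 := hts
    rwa [one_div, ENNReal.inv_le_one] at h1
  -- choose approximating subsequence
  have hchoice : ∀ k : ℕ, ∃ i, eLpNorm (gp - g i) s μ < ENNReal.ofReal ((2⁻¹:ℝ)^k) := fun k =>
    hΛ.2 gp ⟨hgpL, hgpAnn⟩ ((2⁻¹:ℝ)^k) (by positivity)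
  choose j hj using hchoice
  set d' : ℕ → ℂ → ℂ := fun k w => gp' w - g' (j k) w with hd'def
  have hd'meas : ∀ k, Measurable (d' k) := fun k => hgp'meas.sub (hg'meas (j k))
  have hd'ae : ∀ k, (gp - g (j k)) =ᵐ[μ] d' k := fun k => (hgp'ae).sub (hg'ae (j k))
  -- the Hölder constant
  set Mc : ℝ≥0∞ := μ Set.univ ^ ((1:ℝ) - 1/s.toReal) with hMc
  have hexp : (0:ℝ) ≤ 1 - 1/s.toReal := by
    rcases eq_or_ne s ⊤ with rfl | hstop
    · simp
    · have hst : (1:ℝ) ≤ s.toReal := by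
        have := ENNReal.toReal_mono hstop hs1
        simpa using this
      have : 1/s.toReal ≤ 1 := by
        rw [div_le_one (by linarith)]
        exact hst
      linarith
  have hMcne : Mc ≠ ⊤ := (ENNReal.rpow_lt_top_of_nonneg hexp (measure_ne_top μ _)).ne
  -- L¹ bounds
  have hd'L1 : ∀ k, ∫⁻ w, (‖d' k w‖₊ : ℝ≥0∞) ∂μ ≤ ENNReal.ofReal ((2⁻¹:ℝ)^k) * Mc := by
    intro k
    have h1 : ∫⁻ w, (‖d' k w‖₊ : ℝ≥0∞) ∂μ = eLpNorm (d' k) 1 μ :=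
      (eLpNorm_one_eq_lintegral_enorm (f := d' k)).symm
    rw [h1, ← eLpNorm_congr_ae (hd'ae k)]
    have h2 : eLpNorm (gp - g (j k)) 1 μ ≤ eLpNorm (gp - g (j k)) s μ
        * μ Set.univ ^ (1/(1:ℝ≥0∞).toReal - 1/s.toReal) :=
      eLpNorm_le_eLpNorm_mul_rpow_measure_univ hs1
        (hgpL.aestronglyMeasurable.sub (hgL (j k)).aestronglyMeasurable)
    have h3 : (1/(1:ℝ≥0∞).toReal - 1/s.toReal) = (1:ℝ) - 1/s.toReal := by norm_num
    rw [h3] at h2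
    exact le_trans h2 (mul_le_mul_left (le_of_lt (hj k)) _)
  have hgpL1 : ∫⁻ w, (‖gp' w‖₊ : ℝ≥0∞) ∂μ ≠ ⊤ := by
    have : ∫⁻ w, (‖gp' w‖₊ : ℝ≥0∞) ∂μ = eLpNorm gp' 1 μ := (eLpNorm_one_eq_lintegral_enorm (f := gp')).symm
    rw [this, ← eLpNorm_congr_ae hgp'ae]
    exact (hgpL.mono_exponent hs1).eLpNorm_ne_top
  -- the good-set functional
  set Φ : ℂ → ℝ≥0∞ := fun z => (∑' k, IF μ (d' k) z) + IF μ gp' z with hΦdef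
  have hΦmeas : Measurable Φ :=
    (Measurable.ennreal_tsum fun k => IF_measurable μ (hd'meas k)).add (IF_measurable μ hgp'meas)
  -- the good set is co-null
  have hAcnull : volume {z : ℂ | Φ z = ⊤} = 0 := by
    have hball : ∀ n : ℕ, volume ({z : ℂ | Φ z = ⊤} ∩ Metric.ball (0:ℂ) ((n:ℝ)+1)) = 0 := by
      intro n
      have hpos : (0:ℝ) < (n:ℝ)+1 := by positivity
      set CR : ℝ≥0∞ := (∫⁻ z in Metric.ball (0:ℂ) ((n:ℝ)+1), (‖z⁻¹‖₊ : ℝ≥0∞) ∂volume)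
        + (ENNReal.ofReal ((n:ℝ)+1))⁻¹ * volume (Metric.ball (0:ℂ) ((n:ℝ)+1)) with hCR
      have hCRtop : CR ≠ ⊤ := by
        refine (ENNReal.add_lt_top.2 ⟨Ib_lt_top _, ?_⟩).ne
        exact ENNReal.mul_lt_top (ENNReal.inv_lt_top.2 (ENNReal.ofReal_pos.2 hpos))
          measure_ball_lt_top
      have hInt : ∫⁻ z in Metric.ball (0:ℂ) ((n:ℝ)+1), Φ z ∂volume < ⊤ := by
        have hsplit : ∫⁻ z in Metric.ball (0:ℂ) ((n:ℝ)+1), Φ z ∂volume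
            = (∑' k, ∫⁻ z in Metric.ball (0:ℂ) ((n:ℝ)+1), IF μ (d' k) z ∂volume)
              + ∫⁻ z in Metric.ball (0:ℂ) ((n:ℝ)+1), IF μ gp' z ∂volume := by
          rw [hΦdef, lintegral_add_left (Measurable.ennreal_tsum fun k =>
            IF_measurable μ (hd'meas k)),
            lintegral_tsum fun k => (IF_measurable μ (hd'meas k)).aemeasurable]
        rw [hsplit]
        have hsum : (∑' k, ∫⁻ z in Metric.ball (0:ℂ) ((n:ℝ)+1), IF μ (d' k) z ∂volume)
            ≤ ∑' k : ℕ, CR * (ENNReal.ofReal ((2⁻¹:ℝ)^k) * Mc) := by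
          refine ENNReal.tsum_le_tsum fun k => ?_
          refine le_trans (swap_bound (hd'meas k) _ hpos) ?_
          exact mul_le_mul_right (hd'L1 k) _
        have hgeo : (∑' k : ℕ, CR * (ENNReal.ofReal ((2⁻¹:ℝ)^k) * Mc)) < ⊤ := by
          have heq : ∀ k : ℕ, CR * (ENNReal.ofReal ((2⁻¹:ℝ)^k) * Mc)
              = (CR * Mc) * (2⁻¹ : ℝ≥0∞)^k := by
            intro k
            rw [ENNReal.ofReal_pow (by norm_num)]
            have : ENNReal.ofReal (2⁻¹:ℝ) = (2⁻¹ : ℝ≥0∞) := by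
              rw [ENNReal.ofReal_inv_of_pos (by norm_num)]
              norm_num
            rw [this]; ring
          calc (∑' k : ℕ, CR * (ENNReal.ofReal ((2⁻¹:ℝ)^k) * Mc))
              = (CR * Mc) * ∑' k : ℕ, (2⁻¹ : ℝ≥0∞)^k := by
                rw [← ENNReal.tsum_mul_left]
                congr 1; funext k; exact heq k
            _ < ⊤ := by
                rw [ENNReal.tsum_geometric]
                refine ENNReal.mul_lt_top
                  (ENNReal.mul_lt_top (lt_top_iff_ne_top.2 hCRtop)
                    (lt_top_iff_ne_top.2 hMcne)) ?_
                exact ENNReal.inv_lt_top.2 (tsub_pos_of_lt (ENNReal.inv_lt_one.2 ENNReal.one_lt_two))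
        have hgp'part : ∫⁻ z in Metric.ball (0:ℂ) ((n:ℝ)+1), IF μ gp' z ∂volume < ⊤ := by
          refine lt_of_le_of_lt (swap_bound hgp'meas _ hpos) ?_
          exact ENNReal.mul_lt_top (lt_top_iff_ne_top.2 hCRtop) (lt_top_iff_ne_top.2 hgpL1)
        exact ENNReal.add_lt_top.2 ⟨lt_of_le_of_lt hsum hgeo, hgp'part⟩
      have hae := ae_lt_top (hΦmeas) hInt.ne
      have h0 : (volume.restrict (Metric.ball (0:ℂ) ((n:ℝ)+1))) {z : ℂ | ¬ Φ z < ⊤} = 0 :=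
        ae_iff.mp hae
      rw [Measure.restrict_apply' measurableSet_ball] at h0
      refine measure_mono_null ?_ h0
      intro z hz
      exact ⟨by simp [hz.1], hz.2⟩
    have hcover : {z : ℂ | Φ z = ⊤} ⊆
        ⋃ n : ℕ, ({z : ℂ | Φ z = ⊤} ∩ Metric.ball (0:ℂ) ((n:ℝ)+1)) := by
      intro z hz
      obtain ⟨n, hn⟩ := exists_nat_gt ‖z‖
      exact Set.mem_iUnion.2 ⟨n, hz, mem_ball_zero_iff.2 (by linarith)⟩
    exact measure_mono_null hcover (measure_iUnion_null hball)
  -- pointwise facts on the good set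
  have hIFgp' : ∀ z : ℂ, Φ z ≠ ⊤ → IF μ gp' z ≠ ⊤ := fun z hz =>
    ne_top_of_le_ne_top hz le_add_self
  have hIFd' : ∀ (z : ℂ) (k : ℕ), Φ z ≠ ⊤ → IF μ (d' k) z ≠ ⊤ := fun z k hz =>
    ne_top_of_le_ne_top hz (le_trans (ENNReal.le_tsum k) le_self_add)
  have hIFg' : ∀ (z : ℂ) (k : ℕ), Φ z ≠ ⊤ → IF μ (g' (j k)) z ≠ ⊤ := by
    intro z k hz
    have hle : IF μ (g' (j k)) z ≤ IF μ gp' z + IF μ (d' k) z := by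
      unfold IF
      calc ∫⁻ w, (‖(w - z)⁻¹‖₊ : ℝ≥0∞) * (‖g' (j k) w‖₊ : ℝ≥0∞) ∂μ
          ≤ ∫⁻ w, ((‖(w - z)⁻¹‖₊ : ℝ≥0∞) * (‖gp' w‖₊ : ℝ≥0∞)
              + (‖(w - z)⁻¹‖₊ : ℝ≥0∞) * (‖d' k w‖₊ : ℝ≥0∞)) ∂μ := by
            refine lintegral_mono fun w => ?_
            have hnorm : (‖g' (j k) w‖₊ : ℝ≥0∞) ≤ (‖gp' w‖₊ : ℝ≥0∞) + (‖d' k w‖₊ : ℝ≥0∞) := by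
              have heq : g' (j k) w = gp' w - d' k w := by simp [hd'def]
              rw [heq]
              exact_mod_cast nnnorm_sub_le _ _
            rw [← mul_add]
            exact mul_le_mul_right hnorm _
        _ = ∫⁻ w, (‖(w - z)⁻¹‖₊ : ℝ≥0∞) * (‖gp' w‖₊ : ℝ≥0∞) ∂μ
            + ∫⁻ w, (‖(w - z)⁻¹‖₊ : ℝ≥0∞) * (‖d' k w‖₊ : ℝ≥0∞) ∂μ :=
          lintegral_add_left
            ((measurable_id.sub_const z).inv.enorm.mul hgp'meas.enorm) _
    refine ne_top_of_le_ne_top ?_ hle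
    exact ENNReal.add_ne_top.2 ⟨hIFgp' z hz, hIFd' z k hz⟩
  have fact1 : ∀ z : ℂ, Φ z ≠ ⊤ → cauchyPV μ gp z = CF μ gp' z := fun z hz => by
    rw [cauchyPV_congr hgp'ae z]
    exact cauchyPV_eq_CF hgp'meas (hIFgp' z hz)
  have fact2 : ∀ (z : ℂ) (k : ℕ), Φ z ≠ ⊤ →
      cauchyPV μ (g (j k)) z = CF μ (g' (j k)) z := fun z k hz => by
    rw [cauchyPV_congr (hg'ae (j k)) z]
    exact cauchyPV_eq_CF (hg'meas (j k)) (hIFg' z k hz)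
  have fact3 : ∀ z : ℂ, Φ z ≠ ⊤ → (∀ k, CF μ (g' (j k)) z = 0) → CF μ gp' z = 0 := by
    intro z hz hW
    have htsum : (∑' k, IF μ (d' k) z) ≠ ⊤ := ne_top_of_le_ne_top hz le_self_add
    have htend : Tendsto (fun k => IF μ (d' k) z) atTop (𝓝 0) :=
      ENNReal.tendsto_atTop_zero_of_tsum_ne_top htsum
    have hb : ∀ k, (‖CF μ gp' z‖₊ : ℝ≥0∞) ≤ IF μ (d' k) z := by
      intro k
      have h1 : CF μ gp' z = CF μ (d' k) z := by
        have hint1 := IF_integrable hgp'meas (hIFgp' z hz)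
        have hint2 := IF_integrable (hg'meas (j k)) (hIFg' z k hz)
        have : CF μ gp' z - CF μ (g' (j k)) z = CF μ (d' k) z := by
          unfold CF
          rw [← integral_sub hint1 hint2]
          congr 1
          funext w
          simp [hd'def]
          ring
        rw [← this, hW k, sub_zero]
      rw [h1]
      exact norm_CF_le μ (d' k) z
    have hle0 : (‖CF μ gp' z‖₊ : ℝ≥0∞) ≤ 0 := ge_of_tendsto' htend hb
    have : ‖CF μ gp' z‖₊ = 0 := by simpa using hle0
    simpa using this
  -- the graph part is null
  set N : Set ℂ := ⋃ n, (Γ n).carrier with hNdef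
  have hNnull : volume N = 0 := measure_iUnion_null fun n => carrier_null (Γ n)
  set N' : Set ℂ := toMeasurable volume N with hN'def
  have hN'null : volume N' = 0 := by rw [hN'def, measure_toMeasurable]; exact hNnull
  -- the measurable exceptional set
  set W : Set ℂ := ⋂ k : ℕ, {z : ℂ | CF μ (g' (j k)) z = 0} with hWdef
  have hWmeas : MeasurableSet W := MeasurableSet.iInter fun k =>
    (CF_stronglyMeasurable μ (hg'meas (j k))).measurable (measurableSet_singleton 0)
  set Bad : Set ℂ := {z : ℂ | Φ z = ⊤} ∪ (N' ∪ Wᶜ) with hBad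
  have hBadMeas : MeasurableSet Bad :=
    (hΦmeas (measurableSet_singleton ⊤)).union
      ((measurableSet_toMeasurable _ _).union hWmeas.compl)
  -- bad points are in `Bad`
  have hsub : {z : ℂ | ¬ cauchyPV μ gp z = 0} ⊆ Bad := by
    intro z hz
    by_contra hzB
    simp only [hBad, Set.mem_union, Set.mem_setOf_eq, Set.mem_compl_iff, not_or, not_not] at hzB
    obtain ⟨hΦz, _, hzW⟩ := hzB
    have hW0 : ∀ k, CF μ (g' (j k)) z = 0 := fun k => Set.mem_iInter.1 hzW k
    exact hz (by rw [fact1 z hΦz]; exact fact3 z hΦz hW0)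
  -- `Bad ∩ Fset` is null
  have hcap : volume (Bad ∩ Fset μ g Γ h) = 0 := by
    have hsub2 : Bad ∩ Fset μ g Γ h ⊆ {z : ℂ | Φ z = ⊤} ∪ N' := by
      rintro z ⟨hzB, hzF⟩
      by_cases hΦz : Φ z = ⊤
      · exact Or.inl hΦz
      · right
        rcases hzF with (hz0 | hzp) | hzm
        · -- z ∈ F0: then z ∈ W, so z ∈ Bad forces z ∈ N'
          have hzW : z ∈ W := by
            refine Set.mem_iInter.2 fun k => ?_
            show CF μ (g' (j k)) z = 0
            rw [← fact2 z k hΦz]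
            exact hz0.2 (j k)
          rcases hzB with hB | hB | hB
          · exact absurd hB hΦz
          · exact hB
          · exact absurd hzW hB
        · obtain ⟨n, hn⟩ := Set.mem_iUnion.1 hzp.1
          exact subset_toMeasurable _ _ (Set.mem_iUnion.2 ⟨n, hn.1⟩)
        · obtain ⟨n, hn⟩ := Set.mem_iUnion.1 hzm.1
          exact subset_toMeasurable _ _ (Set.mem_iUnion.2 ⟨n, hn.1⟩)
    exact measure_mono_null hsub2 (measure_union_null hAcnull hN'null)
  rw [ae_iff]
  have hle : (volume.restrict (Fset μ g Γ h)) {z : ℂ | ¬ cauchyPV μ gp z = 0}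
      ≤ volume (Bad ∩ Fset μ g Γ h) := by
    rw [← Measure.restrict_apply hBadMeas]
    exact measure_mono hsub
  rw [hcap] at hle
  exact le_antisymm hle zero_le
end
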